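/- arXiv:1907.09302 — 4 statements merged into one kernel-verified Lean document; each statement's English description precedes it below -/
import Mathlib

section
/- Let $N \geq 2$, $s \in (0,1)$, and let $M : [0,\infty) \to \mathbb{R}$ be continuous with $M(t) \geq 0$ for all $t \geq 0$. If the function $t \mapsto M(t)/t^{2s/(N-2s)}$ is nonincreasing on $(0,\infty)$, then the function $t \mapsto \widehat{M}(t) - (1 - \tfrac{2s}{N}) M(t) t$ is nondecreasing on $[0,\infty)$, where $\widehat{M}(t) := \int_0^t M(\tau)\,d\tau$. -/
open MeasureTheory Set

/-- (M5) implies (M6) for Kirchhoff functions. -/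
theorem stmt0 (N : ℕ) (hN : 2 ≤ N) (s : ℝ) (hs0 : 0 < s) (hs1 : s < 1)
    (h2s : 2 * s < N) (M : ℝ → ℝ) (hMc : Continuous M)
    (hM0 : ∀ t ≥ (0:ℝ), 0 ≤ M t)
    (hM5 : AntitoneOn (fun t => M t / t ^ (2 * s / ((N:ℝ) - 2 * s))) (Ioi (0:ℝ))) :
    MonotoneOn (fun t => (∫ τ in (0:ℝ)..t, M τ) - (1 - 2 * s / (N:ℝ)) * M t * t)
      (Ici (0:ℝ)) := by
  have hn0 : (0:ℝ) < (N:ℝ) := by positivity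
  have hns : (0:ℝ) < (N:ℝ) - 2 * s := by linarith
  set θ : ℝ := 2 * s / ((N:ℝ) - 2 * s) with hθdef
  have hθ : 0 < θ := by positivity
  set c : ℝ := 1 - 2 * s / (N:ℝ) with hcdef
  have hθ1 : θ + 1 ≠ 0 := by positivity
  have hc : c = 1 / (θ + 1) := by
    rw [hcdef, hθdef]
    field_simp
    ring
  have hc0 : 0 ≤ c := by
    rw [hc]; positivity
  intro a ha b hb hab
  simp only
  rcases eq_or_lt_of_le hab with rfl | hab'
  · exact le_rfl
  have ha' : (0:ℝ) ≤ a := ha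
  have hb0 : 0 < b := lt_of_le_of_lt ha' hab'
  have hMint : IntervalIntegrable M volume a b := hMc.intervalIntegrable a b
  have hsplit : (∫ τ in (0:ℝ)..a, M τ) + ∫ τ in a..b, M τ = ∫ τ in (0:ℝ)..b, M τ :=
    intervalIntegral.integral_add_adjacent_intervals (hMc.intervalIntegrable 0 a) hMint
  set C : ℝ := M b / b ^ θ with hCdef
  have hC0 : 0 ≤ C := div_nonneg (hM0 b hb0.le) (Real.rpow_nonneg hb0.le θ)
  have hpt : ∀ x ∈ Icc a b, C * x ^ θ ≤ M x := by
    intro x hx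
    rcases eq_or_lt_of_le (ha'.trans hx.1) with h0 | hx0
    · rw [← h0, Real.zero_rpow hθ.ne', mul_zero]
      exact hM0 0 le_rfl
    · have hg := hM5 (mem_Ioi.2 hx0) (mem_Ioi.2 hb0) hx.2
      have hxθ : 0 < x ^ θ := Real.rpow_pos_of_pos hx0 θ
      calc C * x ^ θ ≤ (M x / x ^ θ) * x ^ θ :=
            mul_le_mul_of_nonneg_right hg hxθ.le
        _ = M x := div_mul_cancel₀ _ hxθ.ne'
  have hfint : IntervalIntegrable (fun x => C * x ^ θ) volume a b := by
    apply ContinuousOn.intervalIntegrable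
    exact continuousOn_const.mul
      (continuousOn_id.rpow_const (fun x _ => Or.inr hθ.le))
  have hle : ∫ x in a..b, C * x ^ θ ≤ ∫ x in a..b, M x :=
    intervalIntegral.integral_mono_on hab hfint hMint hpt
  have hval : ∫ x in a..b, C * x ^ θ = C * ((b ^ (θ + 1) - a ^ (θ + 1)) / (θ + 1)) := by
    rw [intervalIntegral.integral_const_mul, integral_rpow (Or.inl (by linarith))]
  have hCb : C * b ^ (θ + 1) = M b * b := by
    rw [Real.rpow_add_one hb0.ne' θ, hCdef]
    have hbθ : (0:ℝ) < b ^ θ := Real.rpow_pos_of_pos hb0 θ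
    field_simp
  have hCa : c * (C * a ^ (θ + 1)) ≤ c * (M a * a) := by
    rcases eq_or_lt_of_le ha' with h0 | ha0
    · rw [← h0, Real.zero_rpow hθ1, mul_zero, mul_zero, mul_zero, mul_zero]
    · have hg := hM5 (mem_Ioi.2 ha0) (mem_Ioi.2 hb0) hab
      have haθ : 0 < a ^ θ := Real.rpow_pos_of_pos ha0 θ
      have hMa : C * a ^ (θ + 1) ≤ M a * a := by
        have : C * a ^ θ ≤ M a / a ^ θ * a ^ θ := mul_le_mul_of_nonneg_right hg haθ.le
        rw [div_mul_cancel₀ _ haθ.ne'] at this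
        calc C * a ^ (θ + 1) = (C * a ^ θ) * a := by
              rw [Real.rpow_add_one ha0.ne' θ]; ring
          _ ≤ M a * a := mul_le_mul_of_nonneg_right this ha0.le
      exact mul_le_mul_of_nonneg_left hMa hc0
  have h1 : C * ((b ^ (θ + 1) - a ^ (θ + 1)) / (θ + 1))
      = c * (C * b ^ (θ + 1)) - c * (C * a ^ (θ + 1)) := by
    rw [hc]; field_simp
  rw [h1, hCb] at hval
  linarith [hle, hval, hsplit, hCa]
end

section
/- Let $N \geq 2$, $s \in (0,1)$ with $2s < N$, and let $M : [0,\infty) \to \mathbb{R}$ be continuous with $M(t) \geq 0$. If $t \mapsto \widehat{M}(t) - (1 - \tfrac{2s}{N}) M(t) t$ is nondecreasing on $[0,\infty)$, where $\widehat{M}(t) := \int_0^t M(\tau)\,d\tau$, then $t \mapsto M(t)/t^{2s/(N-2s)}$ is nonincreasing on $(0,\infty)$. -/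
open MeasureTheory Set

/-- (M6) implies (M5) for Kirchhoff functions. -/
theorem stmt1 (N : ℕ) (hN : 2 ≤ N) (s : ℝ) (hs0 : 0 < s) (hs1 : s < 1)
    (h2s : 2 * s < N) (M : ℝ → ℝ) (hMc : Continuous M)
    (hM0 : ∀ t ≥ (0:ℝ), 0 ≤ M t)
    (hM6 : MonotoneOn (fun t => (∫ τ in (0:ℝ)..t, M τ) - (1 - 2 * s / (N:ℝ)) * M t * t)
      (Ici (0:ℝ))) :
    AntitoneOn (fun t => M t / t ^ (2 * s / ((N:ℝ) - 2 * s))) (Ioi (0:ℝ)) := by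
  have hN0 : (0:ℝ) < N := by
    have : (2:ℝ) ≤ N := by exact_mod_cast hN
    linarith
  set α := 2 * s / ((N:ℝ) - 2 * s) with hαdef
  have hNs : (0:ℝ) < (N:ℝ) - 2 * s := by linarith
  have hα0 : 0 < α := div_pos (by linarith) hNs
  have hα1 : (0:ℝ) < α + 1 := by linarith
  have hθ : (0:ℝ) < 1 - 2 * s / N := by
    rw [sub_pos, div_lt_one hN0]; linarith
  have hkey : (1 - 2 * s / (N:ℝ)) * (α + 1) = 1 := by
    rw [hαdef]; field_simp; ring
  intro a ha b hb hab
  simp only [mem_Ioi] at ha hb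
  by_contra hcon
  push_neg at hcon
  have hcontOn : ContinuousOn (fun t => M t / t ^ α) (Icc a b) := by
    apply hMc.continuousOn.div
    · exact continuousOn_id.rpow_const fun x hx => Or.inl (lt_of_lt_of_le ha hx.1).ne'
    · intro x hx
      exact (Real.rpow_pos_of_pos (lt_of_lt_of_le ha hx.1) α).ne'
  obtain ⟨c, hcmem, hcmax⟩ := isCompact_Icc.exists_isMaxOn (nonempty_Icc.2 hab) hcontOn
  obtain ⟨hac, hcb⟩ := hcmem
  have hc0 : 0 < c := lt_of_lt_of_le ha hac
  set K := M c / c ^ α with hK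
  have hbK : M b / b ^ α ≤ K := hcmax ⟨hab, le_refl b⟩
  have haK : M a / a ^ α < K := lt_of_lt_of_le hcon hbK
  have hMle : ∀ t ∈ Icc a c, M t ≤ K * t ^ α := by
    intro t ht
    have ht0 : 0 < t := lt_of_lt_of_le ha ht.1
    have h1 : M t / t ^ α ≤ K := hcmax ⟨ht.1, le_trans ht.2 hcb⟩
    exact (div_le_iff₀ (Real.rpow_pos_of_pos ht0 α)).1 h1
  have hint : ∀ u v : ℝ, IntervalIntegrable M volume u v := fun u v =>
    hMc.intervalIntegrable u v
  have hintg : IntervalIntegrable (fun τ => K * τ ^ α) volume a c := by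
    apply ContinuousOn.intervalIntegrable
    apply ContinuousOn.mul continuousOn_const
    apply continuousOn_id.rpow_const
    intro x hx
    rw [uIcc_of_le hac] at hx
    exact Or.inl (lt_of_lt_of_le ha hx.1).ne'
  have hsub : (∫ τ in (0:ℝ)..c, M τ) - (∫ τ in (0:ℝ)..a, M τ) = ∫ τ in a..c, M τ :=
    intervalIntegral.integral_interval_sub_left (hint 0 c) (hint 0 a)
  have hI1 : (∫ τ in a..c, M τ) ≤ ∫ τ in a..c, K * τ ^ α :=
    intervalIntegral.integral_mono_on hac (hint a c) hintg hMle
  have hIval : (∫ τ in a..c, K * τ ^ α) = K * ((c ^ (α+1) - a ^ (α+1)) / (α+1)) := by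
    rw [intervalIntegral.integral_const_mul, integral_rpow (Or.inl (by linarith : (-1:ℝ) < α))]
  have hmono := hM6 (mem_Ici.2 ha.le) (mem_Ici.2 hc0.le) hac
  simp only at hmono
  have hMcc : M c * c = K * c ^ (α + 1) := by
    rw [hK, Real.rpow_add_one hc0.ne']
    field_simp
  have hMaa : M a * a = (M a / a ^ α) * a ^ (α + 1) := by
    rw [Real.rpow_add_one ha.ne']
    field_simp
  have hdiv : (c ^ (α+1) - a ^ (α+1)) / (α+1) = (1 - 2*s/(N:ℝ)) * (c ^ (α+1) - a ^ (α+1)) := by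
    rw [div_eq_iff hα1.ne']
    linear_combination -(c ^ (α+1) - a ^ (α+1)) * hkey
  have hpa : 0 < a ^ (α + 1) := Real.rpow_pos_of_pos ha _
  have e1 : (1 - 2*s/(N:ℝ)) * (M c * c) - (1 - 2*s/(N:ℝ)) * (M a * a)
      ≤ ∫ τ in a..c, M τ := by
    rw [← hsub]; nlinarith [hmono]
  have e2 : (∫ τ in a..c, M τ) ≤ K * ((1 - 2*s/(N:ℝ)) * (c ^ (α+1) - a ^ (α+1))) := by
    rw [← hdiv, ← hIval]; exact hI1
  have e3 : (1 - 2*s/(N:ℝ)) * (M c * c) = (1 - 2*s/(N:ℝ)) * (K * c ^ (α+1)) := by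
    rw [hMcc]
  have hfin : (1 - 2*s/(N:ℝ)) * (K * a ^ (α+1)) ≤ (1 - 2*s/(N:ℝ)) * (M a * a) := by
    nlinarith [e1, e2, e3]
  have hfin2 : K * a ^ (α+1) ≤ M a * a := le_of_mul_le_mul_left hfin hθ
  have := mul_lt_mul_of_pos_right haK hpa
  linarith [hMaa]
end

section
/- Let $N \geq 2$, $s \in (0,1)$ with $2s < N$, let $M$ be continuous and nonnegative on $[0,\infty)$ satisfying that $t \mapsto M(t)/t^{2s/(N-2s)}$ is nonincreasing on $(0,\infty)$, and fix $a > 0$. Define $g(t) := \tfrac{1}{2}\widehat{M}(t^{N-2s} a) - t^N \cdot \tfrac{N-2s}{2N} M(a)\, a$ for $t > 0$, where $\widehat{M}(r) = \int_0^r M(\tau)\,d\tau$. Then $g'(t) \geq 0$ for all $t \in (0,1)$ and $g'(t) \leq 0$ for all $t \in (1,\infty)$; in particular $g(t) \leq g(1)$ for all $t > 0$. -/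
open MeasureTheory Set

/-- Fibering map: `t = 1` is a global maximum point of
`g(t) = ½ M̂(t^{N-2s} a) - t^N (N-2s)/(2N) M(a) a`. -/
theorem stmt3 (N : ℕ) (hN : 2 ≤ N) (s : ℝ) (hs0 : 0 < s) (hs1 : s < 1)
    (h2s : 2 * s < N) (M : ℝ → ℝ) (hMc : Continuous M)
    (hM0 : ∀ t ≥ (0:ℝ), 0 ≤ M t)
    (hM5 : AntitoneOn (fun t => M t / t ^ (2 * s / ((N:ℝ) - 2 * s))) (Ioi (0:ℝ)))
    (a : ℝ) (ha : 0 < a) (g : ℝ → ℝ)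
    (hg : ∀ t : ℝ, g t = (1/2) * (∫ τ in (0:ℝ)..(t ^ ((N:ℝ) - 2 * s) * a), M τ)
      - t ^ (N:ℝ) * (((N:ℝ) - 2 * s) / (2 * (N:ℝ))) * (M a * a)) :
    (∀ t ∈ Ioo (0:ℝ) 1, 0 ≤ deriv g t) ∧ (∀ t ∈ Ioi (1:ℝ), deriv g t ≤ 0) ∧
    ∀ t : ℝ, 0 < t → g t ≤ g 1 := by
  have hp : (0:ℝ) < (N:ℝ) - 2 * s := by linarith
  set p : ℝ := (N:ℝ) - 2 * s with hpdef
  have hNpos : (0:ℝ) < (N:ℝ) := by positivity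
  have hNne : ((N:ℝ)) ≠ 0 := ne_of_gt hNpos
  -- derivative formula
  have key : ∀ t : ℝ, 0 < t → HasDerivAt g
      ((p * a / 2) * t ^ (p - 1) * (M (t ^ p * a) - t ^ (2 * s) * M a)) t := by
    intro t ht
    have hF : HasDerivAt (fun u : ℝ => ∫ τ in (0:ℝ)..u, M τ) (M (t ^ p * a)) (t ^ p * a) :=
      intervalIntegral.integral_hasDerivAt_right (hMc.intervalIntegrable _ _)
        (hMc.stronglyMeasurableAtFilter _ _) hMc.continuousAt
    have hinner : HasDerivAt (fun t : ℝ => t ^ p * a) (p * t ^ (p - 1) * a) t :=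
      (Real.hasDerivAt_rpow_const (Or.inl ht.ne')).mul_const a
    have hcomp : HasDerivAt (fun t : ℝ => ∫ τ in (0:ℝ)..(t ^ p * a), M τ)
        (M (t ^ p * a) * (p * t ^ (p - 1) * a)) t := by have := hF.comp t hinner; exact this
    have hNN : HasDerivAt (fun t : ℝ => t ^ ((N:ℝ)) * (p / (2 * (N:ℝ))) * (M a * a))
        (((N:ℝ) * t ^ ((N:ℝ) - 1)) * (p / (2 * (N:ℝ))) * (M a * a)) t :=
      ((Real.hasDerivAt_rpow_const (Or.inl ht.ne')).mul_const _).mul_const _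
    have hgfun : g = fun t : ℝ => (1/2) * (∫ τ in (0:ℝ)..(t ^ p * a), M τ)
        - t ^ ((N:ℝ)) * (p / (2 * (N:ℝ))) * (M a * a) := funext hg
    rw [hgfun]
    have h := (hcomp.const_mul (1/2 : ℝ)).sub hNN
    refine h.congr_deriv ?_
    have htN : t ^ ((N:ℝ) - 1) = t ^ (p - 1) * t ^ (2 * s) := by
      rw [← Real.rpow_add ht, hpdef]; ring_nf
    rw [htN]
    field_simp
  -- sign of the bracket
  have sign1 : ∀ t : ℝ, 0 < t → t ≤ 1 → t ^ (2 * s) * M a ≤ M (t ^ p * a) := by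
    intro t ht ht1
    have htp : (0:ℝ) < t ^ p := Real.rpow_pos_of_pos ht _
    have hu : (0:ℝ) < t ^ p * a := by positivity
    have hle : t ^ p * a ≤ a := by
      nlinarith [Real.rpow_le_one ht.le ht1 hp.le]
    have h := hM5 (mem_Ioi.2 hu) (mem_Ioi.2 ha) hle
    simp only at h
    have hupow : (t ^ p * a) ^ (2 * s / p) = t ^ (2 * s) * a ^ (2 * s / p) := by
      rw [Real.mul_rpow htp.le ha.le, ← Real.rpow_mul ht.le]
      congr 1
      field_simp
    have hapow : (0:ℝ) < a ^ (2 * s / p) := Real.rpow_pos_of_pos ha _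
    have hupos : (0:ℝ) < (t ^ p * a) ^ (2 * s / p) := Real.rpow_pos_of_pos hu _
    rw [div_le_div_iff₀ hapow hupos] at h
    rw [hupow] at h
    have hts : (0:ℝ) < t ^ (2 * s) := Real.rpow_pos_of_pos ht _
    nlinarith
  have sign2 : ∀ t : ℝ, 1 ≤ t → M (t ^ p * a) ≤ t ^ (2 * s) * M a := by
    intro t ht1
    have ht : (0:ℝ) < t := lt_of_lt_of_le one_pos ht1
    have htp : (0:ℝ) < t ^ p := Real.rpow_pos_of_pos ht _
    have hu : (0:ℝ) < t ^ p * a := by positivity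
    have hle : a ≤ t ^ p * a := by
      nlinarith [Real.one_le_rpow ht1 hp.le]
    have h := hM5 (mem_Ioi.2 ha) (mem_Ioi.2 hu) hle
    simp only at h
    have hupow : (t ^ p * a) ^ (2 * s / p) = t ^ (2 * s) * a ^ (2 * s / p) := by
      rw [Real.mul_rpow htp.le ha.le, ← Real.rpow_mul ht.le]
      congr 1
      field_simp
    have hapow : (0:ℝ) < a ^ (2 * s / p) := Real.rpow_pos_of_pos ha _
    have hupos : (0:ℝ) < (t ^ p * a) ^ (2 * s / p) := Real.rpow_pos_of_pos hu _
    rw [div_le_div_iff₀ hupos hapow] at h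
    rw [hupow] at h
    have hts : (0:ℝ) < t ^ (2 * s) := Real.rpow_pos_of_pos ht _
    nlinarith
  have part1 : ∀ t ∈ Ioo (0:ℝ) 1, 0 ≤ deriv g t := by
    intro t ht
    rw [(key t ht.1).deriv]
    have h1 : (0:ℝ) ≤ p * a / 2 := by positivity
    have h2 : (0:ℝ) ≤ t ^ (p - 1) := (Real.rpow_pos_of_pos ht.1 _).le
    have h3 : (0:ℝ) ≤ M (t ^ p * a) - t ^ (2 * s) * M a :=
      sub_nonneg.2 (sign1 t ht.1 ht.2.le)
    positivity
  have part2 : ∀ t ∈ Ioi (1:ℝ), deriv g t ≤ 0 := by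
    intro t ht
    have ht0 : (0:ℝ) < t := lt_trans one_pos ht
    rw [(key t ht0).deriv]
    apply mul_nonpos_of_nonneg_of_nonpos
    · have : (0:ℝ) ≤ t ^ (p - 1) := (Real.rpow_pos_of_pos ht0 _).le
      positivity
    · exact sub_nonpos.2 (sign2 t (le_of_lt ht))
  refine ⟨part1, part2, ?_⟩
  intro t ht
  rcases le_total t 1 with h1 | h1
  · have hmono : MonotoneOn g (Icc t 1) := by
      apply monotoneOn_of_deriv_nonneg (convex_Icc t 1)
      · intro x hx
        exact (key x (lt_of_lt_of_le ht hx.1)).continuousAt.continuousWithinAt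
      · intro x hx
        rw [interior_Icc] at hx
        exact (key x (lt_trans ht hx.1)).differentiableAt.differentiableWithinAt
      · intro x hx
        rw [interior_Icc] at hx
        exact part1 x ⟨lt_trans ht hx.1, hx.2⟩
    exact hmono (left_mem_Icc.2 h1) (right_mem_Icc.2 h1) h1
  · have hanti : AntitoneOn g (Icc 1 t) := by
      apply antitoneOn_of_deriv_nonpos (convex_Icc 1 t)
      · intro x hx
        exact (key x (lt_of_lt_of_le one_pos hx.1)).continuousAt.continuousWithinAt
      · intro x hx
        rw [interior_Icc] at hx
        exact (key x (lt_trans one_pos hx.1)).differentiableAt.differentiableWithinAt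
      · intro x hx
        rw [interior_Icc] at hx
        exact part2 x hx.1
    exact hanti (left_mem_Icc.2 h1) (right_mem_Icc.2 h1) h1
end

section
/- Let $N \geq 2$, $s \in (0,1)$ with $2s < N$, and suppose $M : [0,\infty) \to \mathbb{R}$ is continuous, nonnegative, and satisfies: $t \mapsto M(t)/t^{2s/(N-2s)}$ is nonincreasing on $(0,\infty)$. If for some $0 \leq t_1 < t_2$ one has $\widehat{M}(t_1) - (1-\tfrac{2s}{N})M(t_1)t_1 = \widehat{M}(t_2) - (1-\tfrac{2s}{N})M(t_2)t_2$, then $M(t_1)/t_1^{2s/(N-2s)} = M(t_2)/t_2^{2s/(N-2s)}$ (where for $t_1 = 0$ the claim is $M(t) = k_0 t^{2s/(N-2s)}$ on $[t_1,t_2]$ for some constant $k_0$). In particular, $M(t) = k_0\, t^{2s/(N-2s)}$ for all $t \in [t_1, t_2]$. -/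
open MeasureTheory Set

/-- Equality in the (M5)/(M6) monotonicity forces `M` to be a pure power on `[t₁,t₂]`. -/
theorem stmt5 (N : ℕ) (hN : 2 ≤ N) (s : ℝ) (hs0 : 0 < s) (hs1 : s < 1)
    (h2s : 2 * s < N) (M : ℝ → ℝ) (hMc : Continuous M)
    (hM0 : ∀ t ≥ (0:ℝ), 0 ≤ M t)
    (hM5 : AntitoneOn (fun t => M t / t ^ (2 * s / ((N:ℝ) - 2 * s))) (Ioi (0:ℝ)))
    (t1 t2 : ℝ) (ht1 : 0 ≤ t1) (h12 : t1 < t2)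
    (heq : (∫ τ in (0:ℝ)..t1, M τ) - (1 - 2 * s / (N:ℝ)) * M t1 * t1
      = (∫ τ in (0:ℝ)..t2, M τ) - (1 - 2 * s / (N:ℝ)) * M t2 * t2) :
    (0 < t1 → M t1 / t1 ^ (2 * s / ((N:ℝ) - 2 * s))
        = M t2 / t2 ^ (2 * s / ((N:ℝ) - 2 * s))) ∧
    ∃ k0 : ℝ, ∀ t ∈ Icc t1 t2, M t = k0 * t ^ (2 * s / ((N:ℝ) - 2 * s)) := by
  set α : ℝ := 2 * s / ((N:ℝ) - 2 * s) with hα_def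
  have hNs : 0 < (N:ℝ) - 2 * s := by linarith
  have hα : 0 < α := div_pos (by linarith) hNs
  have ht2 : 0 < t2 := lt_of_le_of_lt ht1 h12
  set c : ℝ := M t2 / t2 ^ α with hc_def
  set g : ℝ → ℝ := fun t => M t - c * t ^ α with hg_def
  have ht2α : (0:ℝ) < t2 ^ α := Real.rpow_pos_of_pos ht2 α
  -- nonnegativity of g on [0, t2]
  have hg_nonneg : ∀ τ, 0 ≤ τ → τ ≤ t2 → 0 ≤ g τ := by
    intro τ hτ0 hτ2
    rcases eq_or_lt_of_le hτ0 with h0 | h0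
    · simp only [hg_def, ← h0, Real.zero_rpow hα.ne', mul_zero, sub_zero]
      exact hM0 0 le_rfl
    · have hmono := hM5 (mem_Ioi.mpr h0) (mem_Ioi.mpr ht2) hτ2
      have hτα : (0:ℝ) < τ ^ α := Real.rpow_pos_of_pos h0 α
      have hmono' : M t2 / t2 ^ α ≤ M τ / τ ^ α := hmono
      rw [div_le_div_iff₀ ht2α hτα] at hmono'
      have : c * τ ^ α ≤ M τ := by
        rw [hc_def, div_mul_eq_mul_div, div_le_iff₀ ht2α]
        linarith
      simpa [hg_def] using sub_nonneg.mpr this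
  -- continuity of g
  have hgc : Continuous g := by
    exact hMc.sub (continuous_const.mul (Real.continuous_rpow_const hα.le))
  -- the key integral identity
  have hN0 : (0:ℝ) < (N:ℝ) := by positivity
  have hα1 : (0:ℝ) < α + 1 := by linarith
  have hk : 1 - 2 * s / (N:ℝ) = 1 / (α + 1) := by
    rw [hα_def]; field_simp; ring
  have hMint : ∀ a b : ℝ, IntervalIntegrable M volume a b :=
    fun a b => hMc.intervalIntegrable a b
  have hsplit : (∫ τ in (0:ℝ)..t1, M τ) + (∫ τ in t1..t2, M τ) = ∫ τ in (0:ℝ)..t2, M τ :=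
    intervalIntegral.integral_add_adjacent_intervals (hMint 0 t1) (hMint t1 t2)
  have hrpow_int : (∫ τ in t1..t2, τ ^ α) = (t2 ^ (α + 1) - t1 ^ (α + 1)) / (α + 1) :=
    integral_rpow (Or.inl (by linarith))
  have hgint : (∫ τ in t1..t2, g τ)
      = (∫ τ in t1..t2, M τ) - c * ((t2 ^ (α + 1) - t1 ^ (α + 1)) / (α + 1)) := by
    rw [hg_def, ← hrpow_int]
    rw [intervalIntegral.integral_sub (g := fun τ => c * τ ^ α) (hMint t1 t2)
      (((continuous_const.mul (Real.continuous_rpow_const hα.le))).intervalIntegrable t1 t2),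
      intervalIntegral.integral_const_mul]
  have hc2 : c * t2 ^ (α + 1) = M t2 * t2 := by
    rw [Real.rpow_add_one ht2.ne' α, hc_def]
    field_simp
  have ht1pow : t1 ^ (α + 1) = t1 ^ α * t1 := by
    rcases eq_or_lt_of_le ht1 with h0 | h0
    · rw [← h0, Real.zero_rpow (by linarith), Real.zero_rpow hα.ne', zero_mul]
    · exact Real.rpow_add_one h0.ne' α
  -- from heq : ∫ g = -(t1 * g t1)/(α+1) ≤ 0
  have hIM : (∫ τ in t1..t2, M τ) = (M t2 * t2 - M t1 * t1) / (α + 1) := by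
    have hheq := heq
    rw [hk] at hheq
    have h2 : (∫ τ in t1..t2, M τ) = (∫ τ in (0:ℝ)..t2, M τ) - ∫ τ in (0:ℝ)..t1, M τ := by
      linarith [hsplit]
    have h3 : (∫ τ in t1..t2, M τ)
        = 1 / (α + 1) * (M t2 * t2) - 1 / (α + 1) * (M t1 * t1) := by
      rw [h2]; linarith
    rw [h3]
    field_simp
  have hgt1 : g t1 = M t1 - c * t1 ^ α := rfl
  have hgint2 : (∫ τ in t1..t2, g τ) = -(t1 * g t1) / (α + 1) := by
    rw [hgint, hIM, ← hc2, ht1pow, hgt1]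
    generalize t2 ^ (α + 1) = A
    generalize t1 ^ α = B
    field_simp
    ring
  have hint_le : (∫ τ in t1..t2, g τ) ≤ 0 := by
    rw [hgint2]
    have h1 : 0 ≤ t1 * g t1 := mul_nonneg ht1 (hg_nonneg t1 ht1 h12.le)
    exact div_nonpos_of_nonpos_of_nonneg (by linarith) hα1.le
  -- g vanishes on [t1, t2]
  have hgz : ∀ t ∈ Icc t1 t2, g t = 0 := by
    intro t ht
    by_contra hne
    have hpos : 0 < g t :=
      lt_of_le_of_ne (hg_nonneg t (le_trans ht1 ht.1) ht.2) (Ne.symm hne)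
    have := intervalIntegral.integral_pos h12 hgc.continuousOn
      (fun x hx => hg_nonneg x (le_trans ht1 hx.1.le) hx.2) ⟨t, ht, hpos⟩
    linarith
  constructor
  · intro ht1pos
    have h1 : M t1 = c * t1 ^ α := by
      have := hgz t1 ⟨le_rfl, h12.le⟩
      simp only [hg_def] at this
      linarith
    have ht1α : (0:ℝ) < t1 ^ α := Real.rpow_pos_of_pos ht1pos α
    rw [h1, hc_def]
    field_simp
  · exact ⟨c, fun t ht => by have := hgz t ht; simp only [hg_def] at this; linarith⟩
end
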